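/- Assume I = ℝ or 0 ∈ I ⊆ (-∞,0]. A function f : Iⁿ → ℝ is comonotonically additive if and only if it is horizontally max-additive, where horizontal max-additivity means f(x) = f(x ∨ c) + f(x - (x ∨ c)) for every x ∈ Iⁿ and c ∈ I with x - (x ∨ c) ∈ Iⁿ. -/

import Mathlib

/-- `f` is horizontally max-additive on `Iⁿ`. -/
def HorizMaxAdd {n : ℕ} (I : Set ℝ) (f : (Fin n → ℝ) → ℝ) : Prop :=
  ∀ x : Fin n → ℝ, (∀ i, x i ∈ I) → ∀ c ∈ I, (∀ i, x i - max (x i) c ∈ I) →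
    f x = f (fun i => max (x i) c) + f (fun i => x i - max (x i) c)

private lemma aux_max_mem {I : Set ℝ} {a b : ℝ} (ha : a ∈ I) (hb : b ∈ I) : max a b ∈ I := by
  rcases le_total a b with h | h
  · rwa [max_eq_right h]
  · rwa [max_eq_left h]

private lemma aux_sub_max_mem {I : Set ℝ} (hI : I.OrdConnected) (h0 : (0:ℝ) ∈ I)
    {a c : ℝ} (ha : a ∈ I) (hc : c ≤ 0) : a - max a c ∈ I := by
  rcases le_total c a with h | h
  · simpa [max_eq_left h] using h0
  · rw [max_eq_right h]
    exact hI.out ha h0 ⟨by linarith, by linarith⟩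

private lemma aux_L0 {n : ℕ} {I : Set ℝ} {f : (Fin n → ℝ) → ℝ}
    (hf : HorizMaxAdd I f) {u v : Fin n → ℝ} {b : ℝ} {S : Fin n → Prop}
    [DecidablePred S]
    (hv : v = fun i => if S i then b else 0)
    (hu0 : ∀ i, u i ≤ 0) (huS : ∀ i, ¬ S i → u i = 0)
    (hb0 : b ≤ 0) (hbI : b ∈ I)
    (huI : ∀ i, u i ∈ I) (hzI : ∀ i, u i + v i ∈ I) :
    f (u + v) = f v + f u := by
  have hmax : ∀ i, max ((u + v) i) b = v i := by
    intro i
    by_cases hS : S i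
    · have h1 : v i = b := by simp [hv, hS]
      have : (u + v) i ≤ b := by
        simp only [Pi.add_apply, h1]; linarith [hu0 i]
      rw [max_eq_right this, h1]
    · have h1 : v i = 0 := by simp [hv, hS]
      have : (u + v) i = 0 := by simp [Pi.add_apply, h1, huS i hS]
      rw [this, max_eq_left hb0, h1]
  have hsub : ∀ i, (u + v) i - max ((u + v) i) b = u i := by
    intro i; rw [hmax i]; simp [Pi.add_apply]
  have key := hf (u + v) hzI b hbI (fun i => by rw [hsub i]; exact huI i)
  rw [funext hmax, funext hsub] at key
  exact key

private lemma aux_core {n : ℕ} {I : Set ℝ} (hI : I.OrdConnected) (h0 : (0:ℝ) ∈ I)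
    {f : (Fin n → ℝ) → ℝ} (hf : HorizMaxAdd I f) :
    ∀ (k : ℕ) (x y : Fin n → ℝ), Monotone x → Monotone y →
      (∀ i, x i ≤ 0) → (∀ i, y i ≤ 0) →
      (∀ i, x i ∈ I) → (∀ i, y i ∈ I) → (∀ i, x i + y i ∈ I) →
      (Finset.univ.filter (fun i => ∃ j, y j < y i)).card ≤ k →
      f (x + y) = f x + f y := by
  intro k
  induction k with
  | zero =>
    intro x y hx hy hx0 hy0 hxI hyI hxyI hcard
    classical
    have hempty : (Finset.univ.filter (fun i => ∃ j, y j < y i)) = ∅ :=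
      Finset.card_eq_zero.mp (Nat.le_zero.mp hcard)
    have hnolt : ∀ i j : Fin n, ¬ (y j < y i) := by
      intro i j hlt
      have : i ∈ Finset.univ.filter (fun i => ∃ j, y j < y i) :=
        Finset.mem_filter.mpr ⟨Finset.mem_univ _, ⟨j, hlt⟩⟩
      rw [hempty] at this
      simp at this
    obtain ⟨b, hb0, hbI, hyb⟩ : ∃ b, b ≤ 0 ∧ b ∈ I ∧ ∀ i, y i = b := by
      rcases isEmpty_or_nonempty (Fin n) with hE | hNE
      · exact ⟨0, le_rfl, h0, fun i => isEmptyElim i⟩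
      · obtain ⟨i0⟩ := hNE
        exact ⟨y i0, hy0 i0, hyI i0,
          fun i => le_antisymm (not_lt.mp (hnolt i i0)) (not_lt.mp (hnolt i0 i))⟩
    have hv : y = fun i => if (fun _ : Fin n => True) i then b else 0 := by
      funext i; simp [hyb i]
    have := aux_L0 hf (u := x) hv hx0 (fun i h => absurd trivial h) hb0 hbI hxI hxyI
    rw [this]; ring
  | succ k ih =>
    intro x y hx hy hx0 hy0 hxI hyI hxyI hcard
    classical
    by_cases hk : (Finset.univ.filter (fun i => ∃ j, y j < y i)).card ≤ k
    · exact ih x y hx hy hx0 hy0 hxI hyI hxyI hk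
    have hScard : (Finset.univ.filter (fun i => ∃ j, y j < y i)).card = k + 1 := by omega
    have hSne : (Finset.univ.filter (fun i => ∃ j, y j < y i)).Nonempty := by
      rw [← Finset.card_pos, hScard]; omega
    obtain ⟨i1, hi1⟩ := hSne
    haveI : Nonempty (Fin n) := ⟨i1⟩
    have hn : 0 < n := Fin.pos_iff_nonempty.mpr ⟨i1⟩
    set z0 : Fin n := ⟨0, hn⟩ with hz0
    set a : ℝ := y z0 with ha
    have hamin : ∀ i, a ≤ y i := fun i => hy (Fin.le_def.mpr (Nat.zero_le _))
    have hfeq : ∀ i : Fin n, (∃ j, y j < y i) ↔ a < y i := by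
      intro i
      constructor
      · rintro ⟨j, hj⟩; exact lt_of_le_of_lt (hamin j) hj
      · intro h; exact ⟨z0, h⟩
    have hfilter_eq : (Finset.univ.filter (fun i => ∃ j, y j < y i))
        = (Finset.univ.filter (fun i => a < y i)) :=
      Finset.filter_congr (fun i _ => by simp [hfeq i])
    set S : Finset (Fin n) := Finset.univ.filter (fun i => a < y i) with hSdef
    have hScard' : S.card = k + 1 := hfilter_eq ▸ hScard
    have hSne' : S.Nonempty := by
      rw [← Finset.card_pos, hScard']; omega
    set j : Fin n := S.min' hSne' with hjdef
    have haj : a < y j := (Finset.mem_filter.mp (S.min'_mem hSne')).2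
    have hjmin : ∀ i, a < y i → j ≤ i := fun i hi =>
      S.min'_le i (Finset.mem_filter.mpr ⟨Finset.mem_univ _, hi⟩)
    have hlt_j : ∀ i, i < j → y i = a := by
      intro i hij
      refine le_antisymm ?_ (hamin i)
      by_contra h
      exact absurd (hjmin i (lt_of_not_ge h)) (not_le.mpr hij)
    set c : ℝ := x j + y j with hc
    have hc0 : c ≤ 0 := add_nonpos (hx0 j) (hy0 j)
    set x' : Fin n → ℝ := fun i => max (x i) (x j) with hx'
    set y' : Fin n → ℝ := fun i => max (y i) (y j) with hy'
    set x'' : Fin n → ℝ := fun i => x i - max (x i) (x j) with hx''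
    set y'' : Fin n → ℝ := fun i => y i - max (y i) (y j) with hy''
    have hmax : ∀ i, max ((x + y) i) c = x' i + y' i := by
      intro i
      rcases le_total i j with h | h
      · have h1 := hx h; have h2 := hy h
        simp only [Pi.add_apply, hx', hy', hc]
        rw [max_eq_right (add_le_add h1 h2), max_eq_right h1, max_eq_right h2]
      · have h1 := hx h; have h2 := hy h
        simp only [Pi.add_apply, hx', hy', hc]
        rw [max_eq_left (add_le_add h1 h2), max_eq_left h1, max_eq_left h2]
    have hsub : ∀ i, (x + y) i - max ((x + y) i) c = x'' i + y'' i := by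
      intro i
      rw [hmax i]
      simp only [Pi.add_apply, hx', hy', hx'', hy'']
      ring
    -- main split
    have e1 := hf (x + y) hxyI c (hxyI j)
      (fun i => by
        have := aux_sub_max_mem hI h0 (hxyI i) hc0
        simpa using this)
    rw [funext hmax, funext hsub] at e1
    have e2 := hf x hxI (x j) (hxI j)
      (fun i => aux_sub_max_mem hI h0 (hxI i) (hx0 j))
    have e3 := hf y hyI (y j) (hyI j)
      (fun i => aux_sub_max_mem hI h0 (hyI i) (hy0 j))
    -- upper part via IH
    have hupper : f (x' + y') = f x' + f y' := by
      apply ih x' y'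
      · exact hx.max monotone_const
      · exact hy.max monotone_const
      · intro i; exact max_le (hx0 i) (hx0 j)
      · intro i; exact max_le (hy0 i) (hy0 j)
      · intro i; exact aux_max_mem (hxI i) (hxI j)
      · intro i; exact aux_max_mem (hyI i) (hyI j)
      · intro i
        have : x' i + y' i = max ((x + y) i) c := (hmax i).symm
        rw [this]; exact aux_max_mem (hxyI i) (hxyI j)
      · -- cardinality decrease
        have hsubset : (Finset.univ.filter (fun i => ∃ j2, y' j2 < y' i)) ⊆ S.erase j := by
          intro i hi
          obtain ⟨j2, hj2⟩ := (Finset.mem_filter.mp hi).2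
          have hyj_le : y j ≤ y' j2 := le_max_right _ _
          have h1 : y j < y' i := lt_of_le_of_lt hyj_le hj2
          have h2 : y j < y i := by
            rcases (lt_max_iff.mp h1) with h | h
            · exact h
            · exact absurd h (lt_irrefl _)
          refine Finset.mem_erase.mpr ⟨?_, Finset.mem_filter.mpr ⟨Finset.mem_univ _, lt_trans haj h2⟩⟩
          intro hij
          rw [hij] at h2
          exact lt_irrefl _ h2
        calc (Finset.univ.filter (fun i => ∃ j2, y' j2 < y' i)).card
            ≤ (S.erase j).card := Finset.card_le_card hsubset
          _ = S.card - 1 := Finset.card_erase_of_mem (S.min'_mem hSne')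
          _ ≤ k := by rw [hScard']; omega
    -- lower part via L0
    have hlower : f (x'' + y'') = f y'' + f x'' := by
      apply aux_L0 hf (S := fun i => i < j) (b := a - y j)
      · funext i
        by_cases h : i < j
        · have hyi : y i = a := hlt_j i h
          simp only [hy'', hyi, max_eq_right haj.le, if_pos h]
        · have h2 : j ≤ i := le_of_not_gt h
          simp only [hy'', max_eq_left (hy h2), sub_self, if_neg h]
      · intro i; exact sub_nonpos.mpr (le_max_left _ _)
      · intro i h
        have h2 : j ≤ i := le_of_not_gt h
        simp only [hx'', max_eq_left (hx h2), sub_self]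
      · linarith
      · refine hI.out (hyI z0) h0 ⟨?_, ?_⟩ <;> · linarith [hy0 j, haj.le]
      · intro i; exact aux_sub_max_mem hI h0 (hxI i) (hx0 j)
      · intro i
        have : x'' i + y'' i = (x + y) i - max ((x + y) i) c := (hsub i).symm
        rw [this]; exact aux_sub_max_mem hI h0 (hxyI i) hc0
    have e1' : f (x + y) = f (x' + y') + f (x'' + y'') := e1
    have e2' : f x = f x' + f x'' := e2
    have e3' : f y = f y' + f y'' := e3
    rw [e1', e2', e3', hupper, hlower]
    ring

private lemma aux_shift {n : ℕ} {f : (Fin n → ℝ) → ℝ}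
    (hf : HorizMaxAdd Set.univ f) (w : Fin n → ℝ) (hw : ∀ i, w i ≤ 0) (c : ℝ) :
    f (fun i => w i + c) = f (fun _ => c) + f w := by
  have key := hf (fun i => w i + c) (fun i => Set.mem_univ _) c (Set.mem_univ _)
    (fun i => Set.mem_univ _)
  have h1 : (fun i => max (w i + c) c) = fun _ : Fin n => c := by
    funext i; exact max_eq_right (by linarith [hw i])
  have h2 : (fun i => w i + c - max (w i + c) c) = w := by
    funext i; rw [max_eq_right (by linarith [hw i] : w i + c ≤ c)]; ring
  rw [h1, h2] at key
  exact key

private lemma aux_const {n : ℕ} {f : (Fin n → ℝ) → ℝ}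
    (hf : HorizMaxAdd Set.univ f) (a b : ℝ) :
    f (fun _ => a + b) = f (fun _ => a) + f (fun _ => b) := by
  set c := max a (a + b) with hc
  have hca : a ≤ c := le_max_left _ _
  have hcab : a + b ≤ c := le_max_right _ _
  have h1 := aux_shift hf (fun _ => a + b - c) (fun i => by show a + b - c ≤ (0:ℝ); linarith) c
  have h2 := aux_shift hf (fun _ => a - c) (fun i => by show a - c ≤ (0:ℝ); linarith) c
  have h3 := aux_shift hf (fun _ => a - c) (fun i => by show a - c ≤ (0:ℝ); linarith) b
  have e1 : (fun _ : Fin n => a + b - c + c) = (fun _ : Fin n => a + b) := by funext i; ring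
  have e2 : (fun _ : Fin n => a - c + c) = (fun _ : Fin n => a) := by funext i; ring
  have e3 : (fun _ : Fin n => a - c + b) = (fun _ : Fin n => a + b - c) := by funext i; ring
  rw [e1] at h1; rw [e2] at h2; rw [e3] at h3
  linarith

private lemma aux_sorted {n : ℕ} {I : Set ℝ} (hI : I.OrdConnected) (h0 : (0:ℝ) ∈ I)
    (hcase : I = Set.univ ∨ I ⊆ Set.Iic 0)
    {f : (Fin n → ℝ) → ℝ} (hf : HorizMaxAdd I f)
    {x y : Fin n → ℝ} (hx : Monotone x) (hy : Monotone y)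
    (hxI : ∀ i, x i ∈ I) (hyI : ∀ i, y i ∈ I) (hxyI : ∀ i, x i + y i ∈ I) :
    f (x + y) = f x + f y := by
  classical
  rcases hcase with hcase | hcase
  · subst hcase
    rcases isEmpty_or_nonempty (Fin n) with hE | hNE
    · exact aux_core hI h0 hf _ x y hx hy (fun i => isEmptyElim i) (fun i => isEmptyElim i)
        hxI hyI hxyI le_rfl
    · obtain ⟨i0, hi0⟩ := Finite.exists_max x
      obtain ⟨i1, hi1⟩ := Finite.exists_max y
      set a := x i0 with hadef
      set b := y i1 with hbdef
      have h1 := aux_shift hf (fun i => x i + y i - (a + b))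
        (fun i => by have := hi0 i; have := hi1 i; linarith) (a + b)
      have h2 := aux_shift hf (fun i => x i - a) (fun i => by linarith [hi0 i]) a
      have h3 := aux_shift hf (fun i => y i - b) (fun i => by linarith [hi1 i]) b
      have h4 := aux_const hf a b
      have hcore := aux_core hI h0 hf
        ((Finset.univ.filter (fun i => ∃ j, (fun i => y i - b) j < (fun i => y i - b) i)).card)
        (fun i => x i - a) (fun i => y i - b)
        (fun p q hpq => sub_le_sub_right (hx hpq) a)
        (fun p q hpq => sub_le_sub_right (hy hpq) b)
        (fun i => by linarith [hi0 i])
        (fun i => by linarith [hi1 i])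
        (fun i => Set.mem_univ _) (fun i => Set.mem_univ _) (fun i => Set.mem_univ _)
        le_rfl
      have e1 : (fun i => x i + y i - (a + b) + (a + b)) = x + y := by
        funext i; simp only [Pi.add_apply]; ring
      have e2 : (fun i => x i - a + a) = x := by funext i; ring
      have e3 : (fun i => y i - b + b) = y := by funext i; ring
      have e5 : ((fun i => x i - a) + fun i => y i - b) = fun i => x i + y i - (a + b) := by
        funext i; simp only [Pi.add_apply]; ring
      rw [e1] at h1; rw [e2] at h2; rw [e3] at h3; rw [e5] at hcore
      linarith
  · exact aux_core hI h0 hf _ x y hx hy (fun i => hcase (hxI i)) (fun i => hcase (hyI i))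
      hxI hyI hxyI le_rfl

/-- `x` and `y` are comonotonic `n`-tuples. -/
def Comonotone {n : ℕ} (x y : Fin n → ℝ) : Prop :=
  ∃ σ : Equiv.Perm (Fin n), Monotone (x ∘ σ) ∧ Monotone (y ∘ σ)

/-- `f` is comonotonically additive on `Iⁿ`. -/
def ComonAdd {n : ℕ} (I : Set ℝ) (f : (Fin n → ℝ) → ℝ) : Prop :=
  ∀ x y : Fin n → ℝ, (∀ i, x i ∈ I) → (∀ i, y i ∈ I) → (∀ i, x i + y i ∈ I) →
    Comonotone x y → f (x + y) = f x + f y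

/-- when `I = ℝ` or `0 ∈ I ⊆ (-∞,0]`, comonotonic additivity is
equivalent to horizontal max-additivity. -/
theorem comonAdd_iff_horizMaxAdd {n : ℕ} (I : Set ℝ) (hI : I.OrdConnected)
    (h0 : (0 : ℝ) ∈ I) (hnt : ∃ x ∈ I, x ≠ 0)
    (hcase : I = Set.univ ∨ I ⊆ Set.Iic 0)
    (f : (Fin n → ℝ) → ℝ) :
    ComonAdd I f ↔ HorizMaxAdd I f := by
  constructor
  · intro hca x hx c hc hcsub
    have hxy : x = (fun i => max (x i) c) + fun i => x i - max (x i) c := by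
      funext i; simp only [Pi.add_apply]; ring
    have hcom : Comonotone (fun i => max (x i) c) (fun i => x i - max (x i) c) := by
      refine ⟨Tuple.sort x, ?_, ?_⟩
      · exact (Tuple.monotone_sort x).max monotone_const
      · intro p q hpq
        have h : x (Tuple.sort x p) ≤ x (Tuple.sort x q) := Tuple.monotone_sort x hpq
        show x (Tuple.sort x p) - max (x (Tuple.sort x p)) c ≤
          x (Tuple.sort x q) - max (x (Tuple.sort x q)) c
        rcases le_total (x (Tuple.sort x p)) c with h1 | h1 <;>
          rcases le_total (x (Tuple.sort x q)) c with h2 | h2 <;>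
          simp [max_eq_left, max_eq_right, h1, h2] <;> linarith
    have key := hca (fun i => max (x i) c) (fun i => x i - max (x i) c)
      (fun i => aux_max_mem (hx i) hc) hcsub
      (fun i => by show max (x i) c + (x i - max (x i) c) ∈ I; simpa using hx i) hcom
    rw [← hxy] at key
    exact key
  · rintro hf x y hxI hyI hxyI ⟨σ, hxσ, hyσ⟩
    set g : (Fin n → ℝ) → ℝ := fun v => f (fun i => v (σ.symm i)) with hg
    have hgf : HorizMaxAdd I g := by
      intro v hv c hc hsub
      exact hf (fun i => v (σ.symm i)) (fun i => hv _) c hc (fun i => hsub _)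
    have hX : Monotone (fun i => x (σ i)) := hxσ
    have hY : Monotone (fun i => y (σ i)) := hyσ
    have key := aux_sorted hI h0 hcase hgf hX hY (fun i => hxI _) (fun i => hyI _)
      (fun i => hxyI _)
    have e1 : g ((fun i => x (σ i)) + fun i => y (σ i)) = f (x + y) := by
      simp only [hg]
      congr 1
      funext i
      simp [Pi.add_apply]
    have e2 : g (fun i => x (σ i)) = f x := by
      simp only [hg]; congr 1; funext i; simp
    have e3 : g (fun i => y (σ i)) = f y := by
      simp only [hg]; congr 1; funext i; simp
    rw [e1, e2, e3] at key
    exact key
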